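/- In a ring with D, U satisfying DU − UD = 1, Σ_{k=0}^{n} C(n,k) D^k U^n D^{n−k} = Σ_{j=0}^{n} C(n,j) · 2^{n−j} · (n!/(n−j)!) · U^{n−j} D^{n−j}. -/

import Mathlib

open Finset

section aux
variable {A : Type*} [Ring A] (D U : A)

lemma keyD (h : D * U = U * D + 1) : ∀ m : ℕ, D * U ^ m = U ^ m * D + (m : A) * U ^ (m - 1) := by
  intro m
  induction m with
  | zero => simp
  | succ m ih =>
    rcases Nat.eq_zero_or_pos m with hm | hm
    · subst hm; simpa using h
    · have hU : U ^ (m - 1) * U = U ^ m := by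
        rw [← pow_succ, Nat.sub_add_cancel hm]
      rw [pow_succ, ← mul_assoc, ih, add_mul, mul_assoc, h, mul_assoc, hU]
      push_cast
      noncomm_ring

lemma keyDk (h : D * U = U * D + 1) : ∀ k n : ℕ, D ^ k * U ^ n =
    ∑ j ∈ range (k + 1), ((k.choose j * n.descFactorial j : ℕ) : A) *
      (U ^ (n - j) * D ^ (k - j)) := by
  intro k
  induction k with
  | zero => intro n; simp
  | succ k ih =>
    intro n
    have hc : ∀ (c : ℕ) (x : A), D * ((c : A) * x) = (c : A) * (D * x) := fun c x => by
      rw [← mul_assoc, (Nat.cast_commute c D).symm.eq, mul_assoc]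
    have step : D ^ (k+1) * U ^ n =
        ∑ j ∈ range (k + 1), (((k.choose j * n.descFactorial j : ℕ) : A) *
          (U ^ (n - j) * D ^ (k + 1 - j)) +
        ((k.choose j * n.descFactorial (j+1) : ℕ) : A) *
          (U ^ (n - (j+1)) * D ^ (k + 1 - (j+1)))) := by
      rw [pow_succ', mul_assoc, ih n, Finset.mul_sum]
      refine Finset.sum_congr rfl fun j hj => ?_
      have hjk : j ≤ k := Nat.lt_succ_iff.mp (Finset.mem_range.mp hj)
      have h1 : D * (U ^ (n - j) * D ^ (k - j)) =
          U ^ (n - j) * D ^ (k + 1 - j) + ((n - j : ℕ) : A) * (U ^ (n - (j+1)) * D ^ (k - j)) := by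
        rw [← mul_assoc, keyD D U h (n - j)]
        have e1 : (k : ℕ) + 1 - j = (k - j) + 1 := by omega
        have e2 : n - (j + 1) = n - j - 1 := by omega
        rw [e1, e2, add_mul, mul_assoc, ← pow_succ', mul_assoc, pow_succ']
      rw [hc, h1, mul_add]
      have e3 : k + 1 - (j + 1) = k - j := by omega
      rw [e3]
      congr 1
      have hnat : k.choose j * n.descFactorial (j+1)
          = k.choose j * n.descFactorial j * (n - j) := by
        rw [Nat.descFactorial_succ]; ring
      simp only [hnat, Nat.cast_mul, mul_assoc]
    rw [step, Finset.sum_add_distrib]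
    set F : ℕ → A := fun j => ((k.choose j * n.descFactorial j : ℕ) : A) *
      (U ^ (n - j) * D ^ (k + 1 - j)) with hF
    set G : ℕ → A := fun j => (((k+1).choose j * n.descFactorial j : ℕ) : A) *
      (U ^ (n - j) * D ^ (k + 1 - j)) with hG
    set H : ℕ → A := fun j => ((k.choose j * n.descFactorial (j+1) : ℕ) : A) *
      (U ^ (n - (j+1)) * D ^ (k + 1 - (j+1))) with hH
    have hGs : ∀ j, G (j+1) = H j + F (j+1) := by
      intro j
      simp only [hF, hG, hH, Nat.choose_succ_succ, add_mul, Nat.cast_add]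
    have hG0 : G 0 = F 0 := by simp [hF, hG]
    have h2 : ∑ j ∈ range (k+2), G j = (∑ j ∈ range (k+1), H j) + ∑ j ∈ range (k+2), F j := by
      rw [Finset.sum_range_succ' G (k+1), Finset.sum_range_succ' F (k+1)]
      simp only [hGs, hG0, Finset.sum_add_distrib]
      rw [add_assoc]
    have h3 : ∑ j ∈ range (k+2), F j = ∑ j ∈ range (k+1), F j := by
      rw [Finset.sum_range_succ]
      simp [hF, Nat.choose_succ_self]
    rw [h2, h3, add_comm]

end aux

lemma natsum (n j : ℕ) (hj : j < n + 1) :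
    ∑ k ∈ Finset.range (n+1), n.choose k * k.choose j = n.choose j * 2 ^ (n - j) := by
  have hj' : j ≤ n := Nat.lt_succ_iff.mp hj
  rw [Finset.range_eq_Ico, ← Finset.sum_Ico_consecutive _ (Nat.zero_le j) (by omega : j ≤ n + 1),
    Finset.sum_Ico_eq_sum_range, Finset.sum_Ico_eq_sum_range]
  have h0 : ∑ i ∈ Finset.range (j - 0), n.choose (0 + i) * (0 + i).choose j = 0 := by
    apply Finset.sum_eq_zero
    intro i hi
    have : 0 + i < j := by simpa using Finset.mem_range.mp hi
    exact mul_eq_zero_of_right _ (Nat.choose_eq_zero_of_lt (by omega))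
  rw [h0, zero_add]
  have : ∀ i ∈ Finset.range (n + 1 - j), n.choose (j + i) * (j + i).choose j
      = n.choose j * (n - j).choose i := by
    intro i hi
    have hi' : i ≤ n - j := by have := Finset.mem_range.mp hi; omega
    rw [Nat.choose_mul (Nat.le_add_right j i)]
    congr 2
    omega
  rw [Finset.sum_congr rfl this, ← Finset.mul_sum]
  congr 1
  have : n + 1 - j = (n - j) + 1 := by omega
  rw [this, Nat.sum_range_choose]

open Finset in
theorem stmt_12 {A : Type*} [Ring A] (D U : A) (h : D * U - U * D = 1) (n : ℕ) :
    ∑ k ∈ range (n + 1), (n.choose k : A) * (D ^ k * U ^ n * D ^ (n - k)) =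
    ∑ j ∈ range (n + 1), ((n.choose j * 2 ^ (n - j) * n.descFactorial j : ℕ) : A) *
      (U ^ (n - j) * D ^ (n - j)) := by
  have h' : D * U = U * D + 1 := by rw [← h]; noncomm_ring
  have expand : ∀ k ∈ range (n + 1), (n.choose k : A) * (D ^ k * U ^ n * D ^ (n - k)) =
      ∑ j ∈ range (n + 1), ((n.choose k * k.choose j * n.descFactorial j : ℕ) : A) *
        (U ^ (n - j) * D ^ (n - j)) := by
    intro k hk
    have hkn : k ≤ n := Nat.lt_succ_iff.mp (mem_range.mp hk)
    rw [keyDk D U h' k n, Finset.sum_mul, Finset.mul_sum]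
    rw [← Finset.sum_subset (Finset.range_subset_range.mpr (by omega : k + 1 ≤ n + 1))
      (fun j _ hj => ?_)]
    · refine Finset.sum_congr rfl fun j hj => ?_
      have hjk : j ≤ k := Nat.lt_succ_iff.mp (mem_range.mp hj)
      have e : D ^ (k - j) * D ^ (n - k) = D ^ (n - j) := by
        rw [← pow_add]; congr 1; omega
      simp only [Nat.cast_mul, mul_assoc, e]
    · have hjk : ¬ j < k + 1 := fun hh => ‹j ∉ range (k+1)› (mem_range.mpr hh)
      have : k.choose j = 0 := Nat.choose_eq_zero_of_lt (by omega)
      simp [this]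
  rw [Finset.sum_congr rfl expand, Finset.sum_comm]
  refine Finset.sum_congr rfl fun j hj => ?_
  rw [← Finset.sum_mul]
  congr 1
  have hnat : ∑ k ∈ range (n+1), n.choose k * k.choose j * n.descFactorial j
      = n.choose j * 2 ^ (n - j) * n.descFactorial j := by
    rw [← Finset.sum_mul, natsum n j (mem_range.mp hj)]
  exact_mod_cast congrArg (Nat.cast (R := A)) hnat
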